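/- arXiv:1701.06698 — 3 statements merged into one kernel-verified Lean document; each statement's English description precedes it below -/
import Mathlib

section
/- Let b ∈ (0,1), δ ∈ (0, min(b/2, (1-b)/2)), and let π_δ be the 1-periodic piecewise linear function defined on [0,1] by: π_δ(r) = r/(2δ) on [0,δ], 1/2 on (δ, b-δ], 1 - (b-r)/(2δ) on (b-δ, b], 1 + (b-r)/(2δ) on (b, b+δ], 1/2 on (b+δ, 1-δ], 1/2 + (1-δ-r)/(2δ) on (1-δ, 1]. Then π_δ is subadditive: π_δ(x+y) ≤ π_δ(x) + π_δ(y) for all x, y ∈ ℝ. -/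
set_option maxHeartbeats 1000000 in
theorem stmt_7 (b δ : ℝ) (hb : b ∈ Set.Ioo (0:ℝ) 1)
    (hδ : δ ∈ Set.Ioo (0:ℝ) (min (b / 2) ((1 - b) / 2)))
    (π : ℝ → ℝ)
    (hper : ∀ x : ℝ, π (x + 1) = π x)
    (hdef : ∀ r : ℝ, 0 ≤ r → r ≤ 1 →
      π r = if r ≤ δ then r / (2 * δ)
        else if r ≤ b - δ then 1 / 2
        else if r ≤ b then 1 - (b - r) / (2 * δ)
        else if r ≤ b + δ then 1 + (b - r) / (2 * δ)
        else if r ≤ 1 - δ then 1 / 2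
        else 1 / 2 + (1 - δ - r) / (2 * δ)) :
    ∀ x y : ℝ, π (x + y) ≤ π x + π y := by
  obtain ⟨hb0, hb1⟩ := hb
  obtain ⟨hδ0, hδm⟩ := hδ
  rw [lt_min_iff] at hδm
  obtain ⟨hδb, hδb'⟩ := hδm
  have h2δ : (0:ℝ) < 2 * δ := by linarith
  have hδne : (2*δ) ≠ 0 := ne_of_gt h2δ
  have hc : ∀ a : ℝ, 2*δ*(a/(2*δ)) = a := fun a => by field_simp
  have hP : Function.Periodic π 1 := hper
  have per_int : ∀ (r : ℝ) (n : ℤ), π (r + n) = π r := by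
    intro r n
    simpa using (hP.int_mul n) r
  have fract_eq : ∀ r : ℝ, π r = π (Int.fract r) := by
    intro r
    conv_lhs => rw [← Int.fract_add_floor r]
    exact per_int _ _
  have hπ0 : π 0 = 0 := by
    rw [hdef 0 le_rfl (by norm_num), if_pos hδ0.le]
    simp
  have hπ1 : π 1 = 0 := by
    have := hper 0
    norm_num at this
    rw [this, hπ0]
  -- Lipschitz bound on [0,1], denominators cleared
  have lip : ∀ u v : ℝ, 0 ≤ u → u ≤ v → v ≤ 1 →
      2*δ*π v ≤ 2*δ*π u + (v - u) ∧ 2*δ*π u ≤ 2*δ*π v + (v - u) := by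
    intro u v hu huv hv
    rw [hdef u hu (huv.trans hv), hdef v (hu.trans huv) hv]
    clear hdef hper hP per_int fract_eq hπ0 hπ1
    have hh : 2*δ*((1:ℝ)/2) = δ := by ring
    split_ifs <;>
      constructor <;>
      · simp only [mul_sub, mul_add, mul_one, hc, hh]
        linarith
  -- π r ≤ 1 on [0,1]
  have upper : ∀ r : ℝ, 0 ≤ r → r ≤ 1 → π r ≤ 1 := by
    intro r h0 h1
    rw [hdef r h0 h1]
    split_ifs with c1 c2 c3 c4 c5
    · rw [div_le_one h2δ]; linarith
    · norm_num
    · have : (0:ℝ) ≤ (b - r)/(2*δ) := div_nonneg (by linarith) h2δ.le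
      linarith
    · have : (b - r)/(2*δ) ≤ 0 := div_nonpos_iff.mpr (Or.inr ⟨by linarith, h2δ.le⟩)
      linarith
    · norm_num
    · have : (1 - δ - r)/(2*δ) ≤ 1/2 := by rw [div_le_iff₀ h2δ]; linarith
      linarith
  -- shift lemma: moving by |t| ≤ δ increases π by at most |t|/(2δ)
  have shift : ∀ v t : ℝ, 0 ≤ v → v < 1 → |t| ≤ δ →
      2*δ*π (v + t) ≤ 2*δ*π v + |t| := by
    intro v t hv0 hv1 ht
    obtain ⟨ht1, ht2⟩ := abs_le.mp ht
    by_cases h1 : v + t < 0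
    · have e : π (v + t) = π (v + t + 1) := (hper (v + t)).symm
      have l1 := (lip (v + t + 1) 1 (by linarith) (by linarith) le_rfl).2
      have l2 := (lip 0 v le_rfl hv0 hv1.le).2
      rw [hπ1] at l1
      rw [hπ0] at l2
      have habs : -t ≤ |t| := neg_le_abs t
      rw [e]
      linarith
    · by_cases h2 : 1 < v + t
      · have e2 : v + t - 1 + 1 = v + t := by ring
        have e : π (v + t) = π (v + t - 1) := by
          rw [← hper (v + t - 1), e2]
        have l1 := (lip 0 (v + t - 1) le_rfl (by linarith) (by linarith)).1
        have l2 := (lip v 1 hv0 hv1.le le_rfl).1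
        rw [hπ0] at l1
        rw [hπ1] at l2
        have habs : t ≤ |t| := le_abs_self t
        rw [e]
        linarith
      · push_neg at h1 h2
        rcases le_or_gt 0 t with h | h
        · have l := (lip v (v + t) hv0 (by linarith) h2).1
          have : |t| = t := abs_of_nonneg h
          linarith
        · have l := (lip (v + t) v h1 (by linarith) hv1.le).2
          have : |t| = -t := abs_of_neg h
          linarith
  -- key lemma: if π v < 1/2 then subadditive with any u ∈ [0,1)
  have key : ∀ u v : ℝ, 0 ≤ u → u < 1 → 0 ≤ v → v < 1 → π v < 1/2 →
      π (u + v) ≤ π u + π v := by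
    intro u v hu0 hu1 hv0 hv1 hlt
    rw [hdef v hv0 hv1.le] at hlt ⊢
    split_ifs at hlt ⊢ with c1 c2 c3 c4 c5
    · -- v ≤ δ : ramp near 0
      have hs := shift u v hu0 hu1 (by rw [abs_of_nonneg hv0]; exact c1)
      rw [abs_of_nonneg hv0] at hs
      refine le_of_mul_le_mul_left ?_ h2δ
      calc 2*δ*π (u + v) ≤ 2*δ*π u + v := hs
        _ = 2*δ*(π u + v/(2*δ)) := by field_simp
    · exact absurd hlt (by norm_num)
    · exfalso
      have : (b - v)/(2*δ) < 1/2 := by rw [div_lt_iff₀ h2δ]; push_neg at c2; linarith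
      linarith
    · exfalso
      have : -(1/2 : ℝ) ≤ (b - v)/(2*δ) := by rw [le_div_iff₀ h2δ]; linarith
      linarith
    · exact absurd hlt (by norm_num)
    · -- v > 1 - δ : ramp near 1
      push_neg at c5
      have e2 : u + (v - 1) + 1 = u + v := by ring
      have e : π (u + v) = π (u + (v - 1)) := by
        rw [← hper (u + (v - 1)), e2]
      have hs := shift u (v - 1) hu0 hu1 (by rw [abs_of_neg (by linarith : v - 1 < 0)]; linarith)
      rw [abs_of_neg (by linarith : v - 1 < 0)] at hs
      rw [e]
      refine le_of_mul_le_mul_left ?_ h2δ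
      calc 2*δ*π (u + (v - 1)) ≤ 2*δ*π u + -(v - 1) := hs
        _ = 2*δ*(π u + (1/2 + (1 - δ - v)/(2*δ))) := by field_simp; ring
  -- main proof
  intro x y
  have hx : π x = π (Int.fract x) := fract_eq x
  have hy : π y = π (Int.fract y) := fract_eq y
  have hxy : π (x + y) = π (Int.fract x + Int.fract y) := by
    have e : x + y = (Int.fract x + Int.fract y) + ((⌊x⌋ + ⌊y⌋ : ℤ) : ℝ) := by
      have fx := Int.fract_add_floor x
      have fy := Int.fract_add_floor y
      push_cast
      linarith
    rw [e, per_int]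
  rw [hx, hy, hxy]
  set u := Int.fract x with hu
  set v := Int.fract y with hv
  have hu0 : 0 ≤ u := Int.fract_nonneg x
  have hu1 : u < 1 := Int.fract_lt_one x
  have hv0 : 0 ≤ v := Int.fract_nonneg y
  have hv1 : v < 1 := Int.fract_lt_one y
  by_cases hpv : π v < 1/2
  · exact key u v hu0 hu1 hv0 hv1 hpv
  by_cases hpu : π u < 1/2
  · have := key v u hv0 hv1 hu0 hu1 hpu
    rw [add_comm u v, add_comm (π u) (π v)]
    exact this
  · push_neg at hpu hpv
    have h1 : π (u + v) ≤ 1 := by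
      by_cases h : u + v ≤ 1
      · exact upper (u + v) (by linarith) h
      · have e2 : u + v - 1 + 1 = u + v := by ring
        have e : π (u + v) = π (u + v - 1) := by
          rw [← hper (u + v - 1), e2]
        rw [e]
        exact upper _ (by linarith) (by linarith)
    linarith
end

section
/- Let d > 0 be rational, α ≥ 0, b ≤ 0 with 1 - αb > 0, and let π̃ : ℝ → ℝ be subadditive with π̃(0) = 0 and satisfying π̃(r) + π̃(b/d - r) = 1 for all r. Define π'(r) = (1 - αb)·π̃(r/d) + α·r. Then π' is subadditive, π'(0) = 0, and π'(r) + π'(b - r) = 1 for all r ∈ ℝ. -/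
theorem stmt_17 (d : ℝ) (hd : 0 < d) (hdrat : ∃ q : ℚ, d = (q : ℝ))
    (α b : ℝ) (hα : 0 ≤ α) (hb : b ≤ 0) (h1 : 0 < 1 - α * b)
    (πt : ℝ → ℝ)
    (hsub : ∀ x y, πt (x + y) ≤ πt x + πt y)
    (h0 : πt 0 = 0)
    (hsym : ∀ r, πt r + πt (b / d - r) = 1)
    (π' : ℝ → ℝ) (hπ' : ∀ r, π' r = (1 - α * b) * πt (r / d) + α * r) :
    (∀ x y, π' (x + y) ≤ π' x + π' y) ∧ π' 0 = 0 ∧ ∀ r, π' r + π' (b - r) = 1 := by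
  refine ⟨fun x y => ?_, ?_, fun r => ?_⟩
  · rw [hπ', hπ', hπ']
    have h : (x + y) / d = x / d + y / d := by ring
    rw [h]
    nlinarith [hsub (x / d) (y / d)]
  · rw [hπ']
    simp [h0]
  · rw [hπ', hπ']
    have h : (b - r) / d = b / d - r / d := by ring
    rw [h]
    nlinarith [hsym (r / d)]
end

section
/- Let b ≤ 0, β > 0, and π' : ℝ → ℝ be subadditive with π'(0) = 0 and π'(r) + π'(b - r) = 1 for all r, and suppose β = 1 + π'(-1)·b. Define π*(r) = (1/β)·(π'(r) + π'(-1)·r). Then π*(0) = 0, π*(-1) = 0, π* is subadditive, and π*(r) + π*(b - r) = 1 for all r ∈ ℝ. -/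
theorem stmt_18 (b β : ℝ) (hb : b ≤ 0) (hβ : 0 < β)
    (π' : ℝ → ℝ)
    (hsub : ∀ x y, π' (x + y) ≤ π' x + π' y)
    (h0 : π' 0 = 0)
    (hsym : ∀ r, π' r + π' (b - r) = 1)
    (hβdef : β = 1 + π' (-1) * b)
    (πs : ℝ → ℝ) (hπs : ∀ r, πs r = (1 / β) * (π' r + π' (-1) * r)) :
    πs 0 = 0 ∧ πs (-1) = 0 ∧ (∀ x y, πs (x + y) ≤ πs x + πs y) ∧
      ∀ r, πs r + πs (b - r) = 1 := by
  refine ⟨by simp [hπs, h0], by simp [hπs], ?_, ?_⟩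
  · intro x y
    rw [hπs, hπs, hπs]
    have := hsub x y
    have h1 : (0:ℝ) < 1/β := by positivity
    nlinarith [this, h1]
  · intro r
    rw [hπs, hπs]
    have := hsym r
    have hβne : β ≠ 0 := ne_of_gt hβ
    field_simp
    nlinarith [this]
end
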